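/- Let M ≥ 1 and t ∈ {1, …, M} be integers, φ > 2, 0 ≤ η_min ≤ η_max reals, and 0 < λ_l ≤ λ ≤ λ_u reals with η_max·λ ≤ 1. Let η_m (1 ≤ m ≤ M) be the UBA learning rates, and set τ = 4·λ_l·(η_max − η_min)·(1 + cos((2t − 1)π/(2M)))·M/((φ − 2)π). Then ∏_{m=1}^{t} (1 − η_m λ)² ≤ exp(−2λ·η_min·t) · ((4M + (φ − 2)π)/(4M + (φ − 2)π·t))^τ. -/

import Mathlib

open Real Finset

/-- The UBA learning rate at step `m` of a phase of length `M`. -/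
noncomputable def ubaRate (M : ℕ) (ηmin ηmax φ : ℝ) (m : ℕ) : ℝ :=
  (ηmax - ηmin) * (2 * (1 + Real.cos ((2 * (m : ℝ) - 1) * Real.pi / (2 * (M : ℝ))))) /
    (2 * φ + (2 - φ) * (1 + Real.cos ((2 * (m : ℝ) - 1) * Real.pi / (2 * (M : ℝ))))) + ηmin

private lemma telescope_le (L g : ℕ → ℝ) :
    ∀ t : ℕ, (∀ m, 1 ≤ m → m ≤ t → L m - L (m - 1) ≤ g m) →
    L t - L 0 ≤ ∑ m ∈ Finset.Icc 1 t, g m := by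
  intro t
  induction t with
  | zero => intro _; simp
  | succ n ih =>
    intro h
    rw [Finset.sum_Icc_succ_top (by omega : 1 ≤ n + 1)]
    have h1 := h (n + 1) (by omega) le_rfl
    have h2 := ih (fun m hm hmn => h m hm (by omega))
    simp only [Nat.add_sub_cancel] at h1
    linarith

private lemma one_sub_cos_le (x : ℝ) (hx : 0 ≤ x) : 1 - Real.cos x ≤ x := by
  rcases le_or_gt 2 x with h2 | h2
  · nlinarith [Real.neg_one_le_cos x]
  · have h := Real.sin_sq_eq_half_sub (x / 2)
    have heq : Real.cos (2 * (x / 2)) = Real.cos x := by ring_nf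
    rw [heq] at h
    have hs0 : 0 ≤ Real.sin (x / 2) :=
      Real.sin_nonneg_of_nonneg_of_le_pi (by linarith) (by nlinarith [Real.two_le_pi])
    have hs1 : Real.sin (x / 2) ≤ 1 := Real.sin_le_one _
    have hs2 : Real.sin (x / 2) ≤ x / 2 := Real.sin_le (by linarith)
    nlinarith

set_option maxHeartbeats 1000000 in
private lemma rate_bounds (M t m : ℕ) (hM : 1 ≤ M) (hm1 : 1 ≤ m) (hmt : m ≤ t) (htM : t ≤ M)
    (φ : ℝ) (hφ : 2 < φ) (ηmin ηmax : ℝ) (h1 : ηmin ≤ ηmax) :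
    ηmin + (ηmax - ηmin) * (4 * (M : ℝ) * (1 + Real.cos ((2 * (t : ℝ) - 1) * Real.pi / (2 * (M : ℝ))))) *
        (1 / (8 * (M : ℝ) + (φ - 2) * Real.pi * (2 * (m : ℝ) - 1))) ≤ ubaRate M ηmin ηmax φ m ∧
      ubaRate M ηmin ηmax φ m ≤ ηmax := by
  have hπ := Real.pi_pos
  have hM1 : (1 : ℝ) ≤ (M : ℝ) := by exact_mod_cast hM
  have hm1' : (1 : ℝ) ≤ (m : ℝ) := by exact_mod_cast hm1
  have hmt' : (m : ℝ) ≤ (t : ℝ) := by exact_mod_cast hmt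
  have htM' : (t : ℝ) ≤ (M : ℝ) := by exact_mod_cast htM
  set θm : ℝ := (2 * (m : ℝ) - 1) * Real.pi / (2 * (M : ℝ)) with hθm
  set θt : ℝ := (2 * (t : ℝ) - 1) * Real.pi / (2 * (M : ℝ)) with hθt
  have hθm0 : 0 ≤ θm := by
    apply div_nonneg (by nlinarith) (by linarith)
  have hθtπ : θt ≤ Real.pi := by
    rw [hθt, div_le_iff₀ (by linarith)]
    nlinarith
  have hθmt : θm ≤ θt := by
    rw [hθm, hθt]
    apply div_le_div_of_nonneg_right ?_ (by linarith)
    nlinarith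
  have hcos : Real.cos θt ≤ Real.cos θm :=
    Real.cos_le_cos_of_nonneg_of_le_pi hθm0 hθtπ hθmt
  set cm : ℝ := 1 + Real.cos θm with hcm
  set ct : ℝ := 1 + Real.cos θt with hct
  have hcm0 : 0 ≤ cm := by have := Real.neg_one_le_cos θm; simp only [hcm]; linarith
  have hcm2 : cm ≤ 2 := by have := Real.cos_le_one θm; simp only [hcm]; linarith
  have hct0 : 0 ≤ ct := by have := Real.neg_one_le_cos θt; simp only [hct]; linarith
  have hctcm : ct ≤ cm := by simp only [hcm, hct]; linarith
  set d : ℝ := 2 * φ + (2 - φ) * cm with hd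
  have hd4 : 4 ≤ d := by rw [hd]; nlinarith
  have hdpos : (0:ℝ) < d := by linarith
  set B : ℝ := 8 * (M : ℝ) + (φ - 2) * Real.pi * (2 * (m : ℝ) - 1) with hB
  have haπm : (0:ℝ) < (φ - 2) * Real.pi * (2 * (m : ℝ) - 1) :=
    mul_pos (mul_pos (by linarith) hπ) (by linarith)
  have hBpos : 0 < B := by rw [hB]; linarith
  have hdB : 2 * (M : ℝ) * d ≤ B := by
    have h1c : 1 - Real.cos θm ≤ θm := one_sub_cos_le θm hθm0
    have hdle : d ≤ 4 + (φ - 2) * θm := by rw [hd, hcm]; nlinarith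
    have heq : 2 * (M : ℝ) * (4 + (φ - 2) * θm) = B := by
      rw [hθm, hB]; field_simp; ring
    nlinarith
  have hrate : ubaRate M ηmin ηmax φ m = (ηmax - ηmin) * (2 * cm) / d + ηmin := by
    rw [hd, hcm, hθm]; rfl
  constructor
  · rw [hrate]
    have hfrac : 4 * (M : ℝ) * ct * (1 / B) ≤ 2 * cm / d := by
      rw [mul_one_div, div_le_div_iff₀ hBpos hdpos]
      nlinarith [mul_le_mul_of_nonneg_left hdB (by linarith : (0:ℝ) ≤ 2 * ct),
        mul_le_mul_of_nonneg_right hctcm (by linarith : (0:ℝ) ≤ 2 * B)]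
    have hmul := mul_le_mul_of_nonneg_left hfrac (show (0:ℝ) ≤ ηmax - ηmin by linarith)
    have hassoc : (ηmax - ηmin) * (2 * cm) / d = (ηmax - ηmin) * (2 * cm / d) := by ring
    rw [hassoc]
    nlinarith [hmul]
  · rw [hrate]
    have : (ηmax - ηmin) * (2 * cm) / d ≤ ηmax - ηmin := by
      rw [div_le_iff₀ hdpos]
      nlinarith [mul_le_mul_of_nonneg_left (show 2 * cm ≤ d by linarith)
        (show (0:ℝ) ≤ ηmax - ηmin by linarith)]
    linarith

private lemma sum_inv_b (M t : ℕ) (hM : 1 ≤ M) (a : ℝ) (ha : 0 < a) :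
    (Real.log (8 * (M : ℝ) + a * Real.pi * (2 * (t : ℝ) + 1)) -
        Real.log (8 * (M : ℝ) + a * Real.pi)) / (2 * a * Real.pi) ≤
      ∑ m ∈ Finset.Icc 1 t, 1 / (8 * (M : ℝ) + a * Real.pi * (2 * (m : ℝ) - 1)) := by
  have hπ := Real.pi_pos
  have hM1 : (1 : ℝ) ≤ (M : ℝ) := by exact_mod_cast hM
  have key := telescope_le (fun k => Real.log (8 * (M : ℝ) + a * Real.pi * (2 * (k : ℝ) + 1)))
    (fun k => 2 * a * Real.pi * (1 / (8 * (M : ℝ) + a * Real.pi * (2 * (k : ℝ) - 1)))) t ?_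
  · have hL0 : Real.log (8 * (M : ℝ) + a * Real.pi * (2 * ((0 : ℕ) : ℝ) + 1)) =
        Real.log (8 * (M : ℝ) + a * Real.pi) := by norm_num
    simp only [hL0] at key
    rw [← Finset.mul_sum] at key
    rw [div_le_iff₀ (by positivity)]
    linarith
  · intro m hm1 hmt
    have hm1' : (1 : ℝ) ≤ (m : ℝ) := by exact_mod_cast hm1
    have hcast : (((m - 1 : ℕ)) : ℝ) = (m : ℝ) - 1 := by
      have := Nat.cast_sub hm1 (R := ℝ); simpa using this
    simp only [hcast]
    have harg : 2 * ((m : ℝ) - 1) + 1 = 2 * (m : ℝ) - 1 := by ring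
    rw [harg]
    set B : ℝ := 8 * (M : ℝ) + a * Real.pi * (2 * (m : ℝ) - 1) with hB
    have haπm : (0:ℝ) < a * Real.pi * (2 * (m : ℝ) - 1) :=
      mul_pos (mul_pos ha hπ) (by linarith)
    have hBpos : 0 < B := by rw [hB]; linarith
    have harg2 : 8 * (M : ℝ) + a * Real.pi * (2 * (m : ℝ) + 1) = B + 2 * a * Real.pi := by
      rw [hB]; ring
    rw [harg2, ← Real.log_div (by positivity) hBpos.ne']
    have hlog := Real.log_le_sub_one_of_pos (show 0 < (B + 2 * a * Real.pi) / B by positivity)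
    have heq : (B + 2 * a * Real.pi) / B - 1 = 2 * a * Real.pi * (1 / B) := by
      field_simp
      ring
    linarith

private lemma log_compare (M t : ℕ) (hM : 1 ≤ M) (ht1 : 1 ≤ t) (a : ℝ) (ha : 0 < a) :
    Real.log (4 * (M : ℝ) + a * Real.pi * (t : ℝ)) - Real.log (4 * (M : ℝ) + a * Real.pi) ≤
      Real.log (8 * (M : ℝ) + a * Real.pi * (2 * (t : ℝ) + 1)) -
        Real.log (8 * (M : ℝ) + a * Real.pi) := by
  have hπ := Real.pi_pos
  have hM1 : (1 : ℝ) ≤ (M : ℝ) := by exact_mod_cast hM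
  have ht1' : (1 : ℝ) ≤ (t : ℝ) := by exact_mod_cast ht1
  have p1 : (0 : ℝ) < 4 * (M : ℝ) + a * Real.pi := by positivity
  have haπ : (0:ℝ) < a * Real.pi := mul_pos ha hπ
  have p2 : (0 : ℝ) < 4 * (M : ℝ) + a * Real.pi * (t : ℝ) := by nlinarith
  have p3 : (0 : ℝ) < 8 * (M : ℝ) + a * Real.pi := by positivity
  have p4 : (0 : ℝ) < 8 * (M : ℝ) + a * Real.pi * (2 * (t : ℝ) + 1) := by nlinarith
  rw [← Real.log_div p2.ne' p1.ne', ← Real.log_div p4.ne' p3.ne']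
  apply Real.log_le_log (by positivity)
  rw [div_le_div_iff₀ p1 p3]
  nlinarith [mul_pos haπ haπ, mul_nonneg (mul_pos haπ haπ).le (by linarith : (0:ℝ) ≤ (t:ℝ)),
    mul_pos (show (0:ℝ) < (M:ℝ) by linarith) haπ]

set_option maxHeartbeats 1000000 in
/-- Lemma 1, case `φ > 2`: bound on the squared contraction factor along the UBA
schedule for an eigenvalue `λ ∈ [λ_l, λ_u]` of the local Hessian. -/
theorem uba_contraction_bound_phi_gt_two
    (M t : ℕ) (hM : 1 ≤ M) (ht1 : 1 ≤ t) (ht2 : t ≤ M)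
    (φ : ℝ) (hφ : 2 < φ) (ηmin ηmax : ℝ) (h0 : 0 ≤ ηmin) (h1 : ηmin ≤ ηmax)
    (lamL lam lamU : ℝ) (hl : 0 < lamL) (hl1 : lamL ≤ lam) (hl2 : lam ≤ lamU)
    (hstep : ηmax * lam ≤ 1) :
    ∏ m ∈ Finset.Icc 1 t, (1 - ubaRate M ηmin ηmax φ m * lam) ^ 2 ≤
      Real.exp (-2 * lam * ηmin * (t : ℝ)) *
        ((4 * (M : ℝ) + (φ - 2) * Real.pi) / (4 * (M : ℝ) + (φ - 2) * Real.pi * (t : ℝ))) ^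
          (4 * lamL * (ηmax - ηmin) *
            (1 + Real.cos ((2 * (t : ℝ) - 1) * Real.pi / (2 * (M : ℝ)))) * (M : ℝ) /
            ((φ - 2) * Real.pi)) := by
  have hπ := Real.pi_pos
  have hM1 : (1 : ℝ) ≤ (M : ℝ) := by exact_mod_cast hM
  have ht1' : (1 : ℝ) ≤ (t : ℝ) := by exact_mod_cast ht1
  have ht2' : (t : ℝ) ≤ (M : ℝ) := by exact_mod_cast ht2
  have hlam : 0 < lam := lt_of_lt_of_le hl hl1
  have ha : (0 : ℝ) < φ - 2 := by linarith
  have haπ : (0 : ℝ) < (φ - 2) * Real.pi := mul_pos ha hπ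
  set ct : ℝ := 1 + Real.cos ((2 * (t : ℝ) - 1) * Real.pi / (2 * (M : ℝ))) with hctdef
  have hct0 : 0 ≤ ct := by
    have := Real.neg_one_le_cos ((2 * (t : ℝ) - 1) * Real.pi / (2 * (M : ℝ)))
    rw [hctdef]; linarith
  set C : ℝ := (ηmax - ηmin) * (4 * (M : ℝ) * ct) with hC
  have hC0 : 0 ≤ C := by
    rw [hC]; apply mul_nonneg (by linarith); positivity
  set S : ℝ := ∑ m ∈ Finset.Icc 1 t, 1 / (8 * (M : ℝ) + (φ - 2) * Real.pi * (2 * (m : ℝ) - 1))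
    with hS
  -- rate bounds
  have hrb : ∀ m ∈ Finset.Icc 1 t,
      ηmin + C * (1 / (8 * (M : ℝ) + (φ - 2) * Real.pi * (2 * (m : ℝ) - 1))) ≤
        ubaRate M ηmin ηmax φ m ∧ ubaRate M ηmin ηmax φ m ≤ ηmax := by
    intro m hm
    obtain ⟨hm1, hmt⟩ := Finset.mem_Icc.mp hm
    have := rate_bounds M t m hM hm1 hmt ht2 φ hφ ηmin ηmax h1
    constructor
    · refine le_trans (le_of_eq ?_) this.1
      rw [hC, hctdef]
    · exact this.2
  have hrb0 : ∀ m ∈ Finset.Icc 1 t, 0 ≤ ubaRate M ηmin ηmax φ m := by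
    intro m hm
    obtain ⟨hm1, hmt⟩ := Finset.mem_Icc.mp hm
    have hm1' : (1 : ℝ) ≤ (m : ℝ) := by exact_mod_cast hm1
    have hBpos : (0:ℝ) < 8 * (M : ℝ) + (φ - 2) * Real.pi * (2 * (m : ℝ) - 1) := by
      nlinarith
    have := (hrb m hm).1
    have : (0:ℝ) ≤ ηmin + C * (1 / (8 * (M : ℝ) + (φ - 2) * Real.pi * (2 * (m : ℝ) - 1))) := by
      positivity
    linarith [(hrb m hm).1]
  -- step 1: product of squares ≤ product of exponentials
  have step1 : ∏ m ∈ Finset.Icc 1 t, (1 - ubaRate M ηmin ηmax φ m * lam) ^ 2 ≤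
      ∏ m ∈ Finset.Icc 1 t, Real.exp (-(2 * (ubaRate M ηmin ηmax φ m * lam))) := by
    apply Finset.prod_le_prod
    · intro m hm; positivity
    · intro m hm
      set x : ℝ := ubaRate M ηmin ηmax φ m * lam with hx
      have hx0 : 0 ≤ x := mul_nonneg (hrb0 m hm) hlam.le
      have hx1 : x ≤ 1 := by
        have := (hrb m hm).2
        have : ubaRate M ηmin ηmax φ m * lam ≤ ηmax * lam :=
          mul_le_mul_of_nonneg_right (hrb m hm).2 hlam.le
        rw [hx]; linarith
      have e1 : 1 - x ≤ Real.exp (-x) := by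
        have := Real.add_one_le_exp (-x); linarith
      calc (1 - x) ^ 2 ≤ Real.exp (-x) ^ 2 := by
            apply pow_le_pow_left₀ (by linarith) e1
        _ = Real.exp (-(2 * x)) := by
            rw [sq, ← Real.exp_add]; congr 1; ring
  -- step 2: product of exp = exp of sum
  have step2 : ∏ m ∈ Finset.Icc 1 t, Real.exp (-(2 * (ubaRate M ηmin ηmax φ m * lam))) =
      Real.exp ((-2 * lam) * ∑ m ∈ Finset.Icc 1 t, ubaRate M ηmin ηmax φ m) := by
    rw [← Real.exp_sum]
    congr 1
    rw [Finset.mul_sum]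
    apply Finset.sum_congr rfl
    intro m _; ring
  -- step 3: lower bound the sum of rates
  have hsum_lower : (t : ℝ) * ηmin + C * S ≤ ∑ m ∈ Finset.Icc 1 t, ubaRate M ηmin ηmax φ m := by
    have := Finset.sum_le_sum (fun m hm => (hrb m hm).1)
    calc (t : ℝ) * ηmin + C * S
        = ∑ m ∈ Finset.Icc 1 t,
            (ηmin + C * (1 / (8 * (M : ℝ) + (φ - 2) * Real.pi * (2 * (m : ℝ) - 1)))) := by
          rw [Finset.sum_add_distrib, Finset.sum_const, Nat.card_Icc, hS, ← Finset.mul_sum]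
          simp
      _ ≤ _ := this
  -- telescoping lower bound for S
  have hΔ := sum_inv_b M t hM (φ - 2) ha
  set Δ : ℝ := Real.log (8 * (M : ℝ) + (φ - 2) * Real.pi * (2 * (t : ℝ) + 1)) -
      Real.log (8 * (M : ℝ) + (φ - 2) * Real.pi) with hΔdef
  have hΔ0 : 0 ≤ Δ := by
    rw [hΔdef]
    have h' : (0:ℝ) < 8 * (M : ℝ) + (φ - 2) * Real.pi := by positivity
    have : Real.log (8 * (M : ℝ) + (φ - 2) * Real.pi) ≤
        Real.log (8 * (M : ℝ) + (φ - 2) * Real.pi * (2 * (t : ℝ) + 1)) := by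
      apply Real.log_le_log h'
      nlinarith
    linarith
  have hSΔ : Δ / (2 * (φ - 2) * Real.pi) ≤ S := hΔ
  have hS0 : 0 ≤ S := le_trans (by positivity) hSΔ
  -- step 4: pointwise exponent comparison
  set τ : ℝ := 4 * lamL * (ηmax - ηmin) * ct * (M : ℝ) / ((φ - 2) * Real.pi) with hτ
  have hτ0 : 0 ≤ τ := by
    rw [hτ]
    apply div_nonneg ?_ haπ.le
    have : (0:ℝ) ≤ 4 * lamL * (ηmax - ηmin) := by nlinarith
    positivity
  set ratio : ℝ := (4 * (M : ℝ) + (φ - 2) * Real.pi) / (4 * (M : ℝ) + (φ - 2) * Real.pi * (t : ℝ))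
    with hratio
  have p1 : (0:ℝ) < 4 * (M : ℝ) + (φ - 2) * Real.pi := by positivity
  have p2 : (0:ℝ) < 4 * (M : ℝ) + (φ - 2) * Real.pi * (t : ℝ) := by nlinarith
  have hratiopos : 0 < ratio := by rw [hratio]; positivity
  set Δ' : ℝ := Real.log (4 * (M : ℝ) + (φ - 2) * Real.pi * (t : ℝ)) -
      Real.log (4 * (M : ℝ) + (φ - 2) * Real.pi) with hΔ'def
  have hlogratio : Real.log ratio = -Δ' := by
    rw [hratio, hΔ'def, Real.log_div p1.ne' p2.ne']; ring
  have hΔ'0 : 0 ≤ Δ' := by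
    rw [hΔ'def]
    have : Real.log (4 * (M : ℝ) + (φ - 2) * Real.pi) ≤
        Real.log (4 * (M : ℝ) + (φ - 2) * Real.pi * (t : ℝ)) := by
      apply Real.log_le_log p1
      nlinarith
    linarith
  have hΔ'Δ : Δ' ≤ Δ := log_compare M t hM ht1 (φ - 2) ha
  have step4 : Real.exp ((-2 * lam) * (C * S)) ≤ ratio ^ τ := by
    rw [Real.rpow_def_of_pos hratiopos, Real.exp_le_exp, hlogratio]
    -- need : -2 * lam * (C * S) ≤ -Δ' * τ, i.e. τ * Δ' ≤ 2 * lam * C * S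
    have key1 : τ * Δ' ≤ τ * Δ := mul_le_mul_of_nonneg_left hΔ'Δ hτ0
    have key2 : τ * Δ = 2 * lamL * C * (Δ / (2 * (φ - 2) * Real.pi)) := by
      rw [hτ, hC]; field_simp
    have key3 : 2 * lamL * C * (Δ / (2 * (φ - 2) * Real.pi)) ≤ 2 * lamL * C * S := by
      apply mul_le_mul_of_nonneg_left hSΔ
      positivity
    have key4 : 2 * lamL * C * S ≤ 2 * lam * C * S := by
      apply mul_le_mul_of_nonneg_right ?_ hS0
      nlinarith
    nlinarith [key1, key2, key3, key4]
  -- assemble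
  calc ∏ m ∈ Finset.Icc 1 t, (1 - ubaRate M ηmin ηmax φ m * lam) ^ 2
      ≤ Real.exp ((-2 * lam) * ∑ m ∈ Finset.Icc 1 t, ubaRate M ηmin ηmax φ m) := by
        rw [← step2]; exact step1
    _ ≤ Real.exp ((-2 * lam) * ((t : ℝ) * ηmin + C * S)) := by
        rw [Real.exp_le_exp]
        exact mul_le_mul_of_nonpos_left hsum_lower (by linarith)
    _ = Real.exp (-2 * lam * ηmin * (t : ℝ)) * Real.exp ((-2 * lam) * (C * S)) := by
        rw [← Real.exp_add]; congr 1; ring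
    _ ≤ Real.exp (-2 * lam * ηmin * (t : ℝ)) * (ratio ^ τ) :=
        mul_le_mul_of_nonneg_left step4 (Real.exp_pos _).le
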